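/- With B the relativised collapsing hierarchy: if α = φ γ δ with γ, δ < φ γ δ (normal form for the Veblen function), then for every ordinal η, α ∈ B(η) if and only if both γ ∈ B(η) and δ ∈ B(η). -/

import Mathlib

open Ordinal

/-- `derivBFamily` as in the older Mathlib (removed since): the derivative of the
family `familyOfBFamily o f`. -/
noncomputable def derivBFamily (o : Ordinal.{0}) (f : ∀ b < o, Ordinal.{0} → Ordinal.{0}) :
    Ordinal.{0} → Ordinal.{0} :=
  derivFamily (familyOfBFamily o f)

/-- The binary Veblen function: `veblen 0 β = ω ^ β`, and for `α > 0`,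
`veblen α` enumerates the common fixed points of `veblen γ` for `γ < α`. -/
noncomputable def veblen : Ordinal → Ordinal → Ordinal :=
  WellFounded.fix Ordinal.lt_wf
    (fun α ih => if α = 0 then fun β => omega0 ^ β
      else derivBFamily α (fun ξ h => ih ξ h))

/-- The set of strongly critical ordinals. -/
def StronglyCritical (γ : Ordinal) : Prop := _root_.veblen γ 0 = γ

/-- `Gamma β` is the `β`-th strongly critical ordinal. -/
noncomputable def Gamma : Ordinal → Ordinal :=
  enumOrd {γ | StronglyCritical γ}

/-- The least uncountable cardinal (as an ordinal) greater than `θ`. -/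
noncomputable def OmegaB (θ : Ordinal) : Ordinal :=
  sInf {o | θ < o ∧ o.card.ord = o ∧ Cardinal.aleph0 < o.card}

/-- Closure of `{0, Ω} ∪ {Γ_β : β ≤ θ}` under `+`, `veblen` and the
given partial collapsing function `f` on arguments below `α`. -/
def closB (θ α : Ordinal) (f : ∀ ξ, ξ < α → Ordinal) : Set Ordinal :=
  ⋂₀ {S : Set Ordinal |
      0 ∈ S ∧ OmegaB θ ∈ S ∧ (∀ β ≤ θ, Gamma β ∈ S) ∧
      (∀ x ∈ S, ∀ y ∈ S, x + y ∈ S) ∧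
      (∀ x ∈ S, ∀ y ∈ S, _root_.veblen x y ∈ S) ∧
      (∀ ξ (h : ξ < α), ξ ∈ S → f ξ h ∈ S)}

/-- The relativised collapsing function `ψ_θ`. -/
noncomputable def psiB (θ : Ordinal) : Ordinal → Ordinal :=
  WellFounded.fix Ordinal.lt_wf
    (fun α ih => sInf {β | β ∉ closB θ α (fun ξ h => ih ξ h)})

/-- The relativised collapsing hierarchy `B_θ(α)`. -/
def BB (θ α : Ordinal) : Set Ordinal :=
  closB θ α (fun ξ _ => psiB θ ξ)

/-- The least strongly critical ordinal strictly above `δ`. -/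
noncomputable def gammaSucc (δ : Ordinal) : Ordinal :=
  sInf {γ | δ < γ ∧ StronglyCritical γ}

set_option linter.deprecated false

theorem derivBFamily_fp' {o : Ordinal.{0}} {f : ∀ b < o, Ordinal.{0} → Ordinal.{0}} {i hi}
    (H : Order.IsNormal (f i hi)) (a : Ordinal.{0}) :
    f i hi (derivBFamily o f a) = derivBFamily o f a := by
  unfold derivBFamily
  rw [← familyOfBFamily_enum o f]
  apply derivFamily_fp
  rw [familyOfBFamily_enum]
  exact H
theorem isNormal_derivBFamily' (o : Ordinal.{0}) (f : ∀ b < o, Ordinal.{0} → Ordinal.{0}) :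
    Order.IsNormal (derivBFamily o f) := isNormal_derivFamily _
theorem derivBFamily_lt_ord' {o : Ordinal.{0}} {f : ∀ b < o, Ordinal.{0} → Ordinal.{0}}
    {c : Cardinal.{0}} (hc : c.IsRegular) (hι : o.card < c) (hc' : c ≠ Cardinal.aleph0)
    (hf : ∀ i hi, ∀ b < c.ord, f i hi b < c.ord) {a : Ordinal.{0}} :
    a < c.ord → derivBFamily o f a < c.ord :=
  Cardinal.derivFamily_lt_ord hc (by rwa [Cardinal.mk_toType]) hc' fun i => hf _ _

theorem veblen_def (α : Ordinal) : _root_.veblen α = if α = 0 then (fun β => omega0 ^ β)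
    else derivBFamily α (fun ξ _ => _root_.veblen ξ) := by
  conv_lhs => rw [_root_.veblen, WellFounded.fix_eq]
  rfl
theorem veblen_zero (β : Ordinal) : _root_.veblen 0 β = omega0 ^ β := by
  rw [veblen_def]; simp
theorem veblen_pos {α : Ordinal} (h : α ≠ 0) :
    _root_.veblen α = derivBFamily α (fun ξ _ => _root_.veblen ξ) := by
  rw [veblen_def, if_neg h]
theorem isNormal_veblen (α : Ordinal) : Order.IsNormal (_root_.veblen α) := by
  rw [veblen_def]
  split
  · exact isNormal_opow one_lt_omega0
  · exact isNormal_derivBFamily' _ _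
theorem veblen_fp {γ α : Ordinal} (h : γ < α) (β : Ordinal) :
    _root_.veblen γ (_root_.veblen α β) = _root_.veblen α β := by
  have h0 : α ≠ 0 := fun e => by simp [e] at h
  rw [_root_.veblen_pos h0]
  exact derivBFamily_fp' (f := fun ξ _ => _root_.veblen ξ) (i := γ) (hi := h) (_root_.isNormal_veblen γ) β
theorem veblen_le_veblen_right (γ : Ordinal) {β β' : Ordinal} (h : β ≤ β') :
    _root_.veblen γ β ≤ _root_.veblen γ β' := (_root_.isNormal_veblen γ).strictMono.monotone h
theorem veblen_right_inj {γ β β' : Ordinal} (h : _root_.veblen γ β = _root_.veblen γ β') : β = β' :=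
  (_root_.isNormal_veblen γ).strictMono.injective h
theorem veblen_le_veblen_left {γ γ' : Ordinal} (h : γ ≤ γ') (β : Ordinal) :
    _root_.veblen γ β ≤ _root_.veblen γ' β := by
  rcases h.lt_or_eq with h | rfl
  · calc _root_.veblen γ β ≤ _root_.veblen γ (_root_.veblen γ' β) :=
          _root_.veblen_le_veblen_right γ (_root_.isNormal_veblen γ').strictMono.le_apply
      _ = _root_.veblen γ' β := _root_.veblen_fp h β
  · rfl
theorem le_veblen_zero (α : Ordinal) : α ≤ _root_.veblen α 0 := by
  induction α using Ordinal.induction with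
  | h α IH =>
  by_contra hc
  push_neg at hc
  have IHv : _root_.veblen α 0 ≤ _root_.veblen (_root_.veblen α 0) 0 := IH _ hc
  have h1 : _root_.veblen (_root_.veblen α 0) (_root_.veblen α 0) = _root_.veblen α 0 := _root_.veblen_fp hc 0
  have h3 : _root_.veblen (_root_.veblen α 0) 0 = _root_.veblen α 0 :=
    le_antisymm ((_root_.veblen_le_veblen_right _ (zero_le (a := _))).trans h1.le) IHv
  have h0 : (0 : Ordinal) = _root_.veblen α 0 := _root_.veblen_right_inj (h3.trans h1.symm)
  have hα0 : (0 : Ordinal) < α := (zero_le (a := _)).trans_lt hc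
  have h4 : _root_.veblen 0 (_root_.veblen α 0) = _root_.veblen α 0 := _root_.veblen_fp hα0 0
  rw [← h0, _root_.veblen_zero, opow_zero] at h4
  exact one_ne_zero h4
theorem le_veblen (α β : Ordinal) : α ≤ _root_.veblen α β :=
  (_root_.le_veblen_zero α).trans (_root_.veblen_le_veblen_right α (zero_le (a := β)))
theorem omega0_opow_lt_ord {κ : Cardinal} (hκ : κ.IsRegular) (hκ0 : Cardinal.aleph0 < κ) :
    ∀ β < κ.ord, omega0 ^ β < κ.ord := by
  intro β
  induction β using Ordinal.limitRecOn with
  | zero => intro _; rw [opow_zero, Cardinal.lt_ord, Ordinal.card_one]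
            exact Cardinal.one_lt_aleph0.trans hκ0
  | add_one b IHb =>
      intro hb
      rw [opow_add_one, Cardinal.lt_ord, Ordinal.card_mul, Ordinal.card_omega0]
      exact Cardinal.mul_lt_of_lt hκ0.le
        (Cardinal.lt_ord.1 (IHb ((Order.lt_succ b).trans hb))) hκ0
  | limit b hb IHb =>
      intro hβ
      exact ((opow_le_of_isSuccLimit omega0_ne_zero hb).2 fun i hi =>
        le_bsup (fun x _ => omega0 ^ x) i hi).trans_lt <| bsup_lt_ord (by rw [hκ.cof_eq]; exact Cardinal.lt_ord.1 hβ)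
        (fun i hi => IHb i hi (hi.trans hβ))
theorem veblen_lt_ord {κ : Cardinal} (hκ : κ.IsRegular) (hκ0 : Cardinal.aleph0 < κ) :
    ∀ γ < κ.ord, ∀ β < κ.ord, _root_.veblen γ β < κ.ord := by
  intro γ
  induction γ using Ordinal.induction with
  | h γ IH =>
  intro hγ β hβ
  rcases eq_or_ne γ 0 with rfl | h0
  · rw [_root_.veblen_zero]; exact omega0_opow_lt_ord hκ hκ0 β hβ
  · rw [_root_.veblen_pos h0]
    exact derivBFamily_lt_ord' hκ (by rwa [← Cardinal.lt_ord]) hκ0.ne'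
      (fun i hi b hb => IH i hi (hi.trans hγ) b hb) hβ
theorem sc_ord {κ : Cardinal} (hκ : κ.IsRegular) (hκ0 : Cardinal.aleph0 < κ) :
    StronglyCritical κ.ord := by
  have hlim : Order.IsSuccLimit κ.ord := Cardinal.isSuccLimit_ord hκ0.le
  have hne : κ.ord ≠ 0 := hlim.pos.ne'
  have hfp : ∀ γ < κ.ord, _root_.veblen γ κ.ord = κ.ord := fun γ hγ =>
    le_antisymm
      (((_root_.isNormal_veblen γ).le_iff_forall_le hlim).2 fun b hb =>
        (veblen_lt_ord hκ hκ0 γ hγ b hb).le)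
      (_root_.isNormal_veblen γ).strictMono.le_apply
  refine le_antisymm ?_ (_root_.le_veblen_zero κ.ord)
  rw [_root_.veblen_pos hne]
  have hd : derivBFamily κ.ord (fun ξ _ => _root_.veblen ξ) 0
      = nfpFamily (familyOfBFamily κ.ord (fun ξ _ => _root_.veblen ξ)) 0 := derivFamily_zero _
  rw [hd]
  exact nfpFamily_le_fp (fun i => (_root_.isNormal_veblen _).strictMono.monotone)
    (zero_le (a := _)) (fun i => (hfp _ (typein_lt_self i)).le)
theorem exists_sc_gt (a : Ordinal) : ∃ b, a < b ∧ StronglyCritical b := by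
  refine ⟨(Order.succ (max a.card Cardinal.aleph0)).ord, ?_, sc_ord
    (Cardinal.isRegular_succ (le_max_right _ _))
    ((le_max_right _ _).trans_lt (Order.lt_succ _))⟩
  rw [Cardinal.lt_ord]
  exact (le_max_left _ _).trans_lt (Order.lt_succ _)
theorem sc_unbounded : ¬ BddAbove {γ | StronglyCritical γ} := by
  rw [not_bddAbove_iff]
  intro a
  obtain ⟨b, h1, h2⟩ := exists_sc_gt a
  exact ⟨b, h2, h1⟩
theorem sc_ne_veblen {x γ δ : Ordinal} (hx : StronglyCritical x)
    (hγ : γ < _root_.veblen γ δ) (hδ : δ < _root_.veblen γ δ) : x ≠ _root_.veblen γ δ := by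
  intro he
  have hγx : γ < x := he ▸ hγ
  have hfix : _root_.veblen γ x = x := by
    calc _root_.veblen γ x = _root_.veblen γ (_root_.veblen x 0) := by rw [hx]
      _ = _root_.veblen x 0 := _root_.veblen_fp hγx 0
      _ = x := hx
  have hdx : δ = x := _root_.veblen_right_inj (γ := γ) (by rw [hfix, ← he])
  rw [← he, ← hdx] at hδ
  exact lt_irrefl _ hδ
theorem sc_Gamma (β : Ordinal) : StronglyCritical (Gamma β) :=
  enumOrd_mem sc_unbounded β
theorem omegaB_eq (θ : Ordinal) :
    OmegaB θ = (Order.succ (max θ.card Cardinal.aleph0)).ord := by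
  have hmem : (Order.succ (max θ.card Cardinal.aleph0)).ord ∈
      {o | θ < o ∧ o.card.ord = o ∧ Cardinal.aleph0 < o.card} := by
    refine ⟨?_, by rw [Cardinal.card_ord], ?_⟩
    · rw [Cardinal.lt_ord]
      exact (le_max_left _ _).trans_lt (Order.lt_succ _)
    · rw [Cardinal.card_ord]
      exact (le_max_right _ _).trans_lt (Order.lt_succ _)
  refine le_antisymm (csInf_le (OrderBot.bddBelow _) hmem) (le_csInf ⟨_, hmem⟩ ?_)
  rintro o ⟨h1, h2, h3⟩
  have hθo : θ.card < o.card := by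
    by_contra hle
    push_neg at hle
    have : o ≤ θ := by
      calc o = o.card.ord := h2.symm
        _ ≤ θ.card.ord := Cardinal.ord_le_ord.2 hle
        _ ≤ θ := Cardinal.ord_card_le θ
    exact absurd h1 this.not_gt
  calc (Order.succ (max θ.card Cardinal.aleph0)).ord ≤ o.card.ord := by
        rw [Cardinal.ord_le_ord, Order.succ_le_iff, max_lt_iff]
        exact ⟨hθo, h3⟩
    _ = o := h2
theorem sc_omegaB (θ : Ordinal) : StronglyCritical (OmegaB θ) := by
  rw [omegaB_eq]
  exact sc_ord (Cardinal.isRegular_succ (le_max_right _ _))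
    ((le_max_right _ _).trans_lt (Order.lt_succ _))
theorem psiB_def (θ ξ : Ordinal) : psiB θ ξ = sInf {β | β ∉ BB θ ξ} := by
  conv_lhs => rw [psiB, WellFounded.fix_eq]
  rfl
theorem zero_mem_BB (θ η : Ordinal) : 0 ∈ BB θ η := fun _ hS => hS.1
theorem omegaB_mem_BB (θ η : Ordinal) : OmegaB θ ∈ BB θ η := fun _ hS => hS.2.1
theorem Gamma_mem_BB {θ β : Ordinal} (η : Ordinal) (hβ : β ≤ θ) : Gamma β ∈ BB θ η :=
  fun _ hS => hS.2.2.1 β hβ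
theorem add_mem_BB {θ η x y : Ordinal} (hx : x ∈ BB θ η) (hy : y ∈ BB θ η) :
    x + y ∈ BB θ η := fun S hS => hS.2.2.2.1 x (hx S hS) y (hy S hS)
theorem veblen_mem_BB {θ η x y : Ordinal} (hx : x ∈ BB θ η) (hy : y ∈ BB θ η) :
    _root_.veblen x y ∈ BB θ η := fun S hS => hS.2.2.2.2.1 x (hx S hS) y (hy S hS)
theorem psi_mem_BB {θ η ξ : Ordinal} (hξ : ξ < η) (h : ξ ∈ BB θ η) :
    psiB θ ξ ∈ BB θ η := fun S hS => hS.2.2.2.2.2 ξ hξ (h S hS)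
theorem psi_ne_veblen (θ ξ : Ordinal) {γ δ : Ordinal}
    (hγ : γ < _root_.veblen γ δ) (hδ : δ < _root_.veblen γ δ) : psiB θ ξ ≠ _root_.veblen γ δ := by
  rw [psiB_def]
  intro he
  by_cases hT : {β | β ∉ BB θ ξ}.Nonempty
  · have hmem : sInf {β | β ∉ BB θ ξ} ∈ {β | β ∉ BB θ ξ} := csInf_mem hT
    have hlt : ∀ b < sInf {β | β ∉ BB θ ξ}, b ∈ BB θ ξ := fun b hb =>
      not_not.1 (notMem_of_lt_csInf hb (OrderBot.bddBelow _))
    have hγB : γ ∈ BB θ ξ := hlt γ (by rw [he]; exact hγ)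
    have hδB : δ ∈ BB θ ξ := hlt δ (by rw [he]; exact hδ)
    exact hmem (he ▸ veblen_mem_BB hγB hδB)
  · rw [Set.not_nonempty_iff_eq_empty] at hT
    rw [hT, Ordinal.sInf_empty] at he
    have : (0 : Ordinal) < _root_.veblen γ δ := (zero_le (a := δ)).trans_lt hδ
    rw [← he] at this
    simp at this
theorem stmt17 (θ η α γ δ : Ordinal) (hγ : γ < _root_.veblen γ δ) (hδ : δ < _root_.veblen γ δ)
    (hα : α = _root_.veblen γ δ) :
    α ∈ BB θ η ↔ γ ∈ BB θ η ∧ δ ∈ BB θ η := by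
  subst hα
  constructor
  · intro hA
    by_contra hnot
    have hvpos : (0 : Ordinal) < _root_.veblen γ δ := (zero_le (a := δ)).trans_lt hδ
    have hP : ∃ b : Ordinal, _root_.veblen γ δ = omega0 ^ b := by
      rcases eq_or_ne γ 0 with rfl | h0
      · exact ⟨δ, _root_.veblen_zero δ⟩
      · refine ⟨_root_.veblen γ δ, ?_⟩
        rw [← _root_.veblen_zero (_root_.veblen γ δ), _root_.veblen_fp (pos_iff_ne_zero.2 h0) δ]
    obtain ⟨b, hb⟩ := hP
    have hPrin : Ordinal.Principal (· + ·) (_root_.veblen γ δ) := hb ▸ principal_add_omega0_opow b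
    have hsub : BB θ η ⊆ {x | x ∈ BB θ η ∧ x ≠ _root_.veblen γ δ} := by
      apply Set.sInter_subset_of_mem
      refine ⟨⟨zero_mem_BB θ η, hvpos.ne⟩,
        ⟨omegaB_mem_BB θ η, sc_ne_veblen (sc_omegaB θ) hγ hδ⟩,
        fun β hβ => ⟨Gamma_mem_BB η hβ, sc_ne_veblen (sc_Gamma β) hγ hδ⟩, ?_, ?_, ?_⟩
      · rintro x ⟨hx1, hx2⟩ y ⟨hy1, hy2⟩
        refine ⟨add_mem_BB hx1 hy1, fun he => ?_⟩
        have hxlt : x < _root_.veblen γ δ := lt_of_le_of_ne (he ▸ le_self_add) hx2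
        have hylt : y < _root_.veblen γ δ := lt_of_le_of_ne (he ▸ le_add_self) hy2
        exact (hPrin hxlt hylt).ne he
      · rintro x ⟨hx1, hx2⟩ y ⟨hy1, hy2⟩
        refine ⟨veblen_mem_BB hx1 hy1, fun he => ?_⟩
        rcases lt_trichotomy x γ with h | h | h
        · exact hy2 (_root_.veblen_right_inj (he.trans (_root_.veblen_fp h δ).symm))
        · subst h
          exact hnot ⟨hx1, (_root_.veblen_right_inj he) ▸ hy1⟩
        · have h2 := _root_.veblen_fp h y
          rw [he] at h2
          have h3 : _root_.veblen γ δ = δ := _root_.veblen_right_inj h2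
          rw [h3] at hδ
          exact lt_irrefl δ hδ
      · rintro ξ hξ ⟨hξ1, _⟩
        exact ⟨psi_mem_BB hξ hξ1, psi_ne_veblen θ ξ hγ hδ⟩
    exact (hsub hA).2 rfl
  · rintro ⟨h1, h2⟩
    exact veblen_mem_BB h1 h2
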